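/- Fix α > 0 and a resampling period p ∈ ℕ, p ≥ 1, and set α_n = α if p divides n and α_n = 0 otherwise. Then for all n ≥ 0 and 0 ≤ q < p (with np+q ≥ 1) the solution of the covariance recursion admits the closed form Σ_{np+q} = (1+α)^n · R ( R + ( Σ_{j=1}^{np+q} (1+α)^{⌊(j-1)/p⌋} ) Σ₀ )⁻¹ Σ₀, where ⌊·⌋ denotes the integer floor. -/

import Mathlib

open Matrix Finset

lemma aux_smul_posSemidef {d : ℕ} {A : Matrix (Fin d) (Fin d) ℝ} (hA : A.PosSemidef)
    {c : ℝ} (hc : 0 ≤ c) : (c • A).PosSemidef := by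
  refine ⟨?_, fun x => ?_⟩
  · unfold Matrix.IsHermitian
    rw [conjTranspose_smul, hA.1.eq]
    simp
  · exact (hA.smul hc).2 x

lemma aux_key {d : ℕ} (R S0 : Matrix (Fin d) (Fin d) ℝ) (hR : R.PosDef) (hS0 : S0.PosDef)
    (c s : ℝ) (hc : 0 < c) (hs : 0 ≤ s) :
    R * (R + c • (R * (R + s • S0)⁻¹ * S0))⁻¹ * (c • (R * (R + s • S0)⁻¹ * S0))
      = c • (R * (R + (s + c) • S0)⁻¹ * S0) := by
  set A := R + s • S0 with hAdef
  set B := R + (s + c) • S0 with hBdef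
  have hRd : IsUnit R.det := hR.det_pos.ne'.isUnit
  have hAd : IsUnit A.det :=
    (hR.add_posSemidef (aux_smul_posSemidef hS0.posSemidef hs)).det_pos.ne'.isUnit
  have hBd : IsUnit B.det :=
    (hR.add_posSemidef (aux_smul_posSemidef hS0.posSemidef (by linarith))).det_pos.ne'.isUnit
  have hBA : B = A + c • S0 := by
    rw [hBdef, hAdef, add_smul, add_assoc]
  have hsum : R + c • (R * A⁻¹ * S0) = R * A⁻¹ * B := by
    rw [hBA, Matrix.mul_add, Matrix.mul_assoc R A⁻¹ A,
      Matrix.nonsing_inv_mul A hAd, Matrix.mul_one, Matrix.mul_smul]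
  rw [hsum, Matrix.mul_inv_rev, Matrix.mul_inv_rev, Matrix.nonsing_inv_nonsing_inv A hAd,
    Matrix.mul_smul]
  congr 1
  simp only [Matrix.mul_assoc]
  rw [Matrix.nonsing_inv_mul_cancel_left R _ hRd, Matrix.mul_nonsing_inv_cancel_left A _ hAd]

/-- Closed form of the covariance recursion with periodic resampling
(`α_n = α` if `p ∣ n`, else `0`):
`Σ_{np+q} = (1+α)^n R (R + (∑_{j=1}^{np+q} (1+α)^{⌊(j-1)/p⌋}) Σ₀)⁻¹ Σ₀`. -/
theorem stmt_5 {d : ℕ} (hd : 1 ≤ d)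
    (R S0 : Matrix (Fin d) (Fin d) ℝ) (hR : R.PosDef) (hS0pd : S0.PosDef)
    (α : ℝ) (hα : 0 < α) (p : ℕ) (hp : 1 ≤ p)
    (αseq : ℕ → ℝ) (hαseq : ∀ n, αseq n = if p ∣ n then α else 0)
    (S : ℕ → Matrix (Fin d) (Fin d) ℝ) (hS0 : S 0 = S0)
    (hrec : ∀ n, S (n + 1) = (1 + αseq (n + 1)) • (R * (R + S n)⁻¹ * S n)) :
    ∀ n q, q < p → 1 ≤ n * p + q →
      S (n * p + q) = ((1 + α) ^ n) •
        (R * (R + (∑ j ∈ Icc 1 (n * p + q), (1 + α) ^ ((j - 1) / p)) • S0)⁻¹ * S0) := by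
  have hα1 : (0 : ℝ) < 1 + α := by linarith
  have hRd : IsUnit R.det := hR.det_pos.ne'.isUnit
  have main : ∀ m, S m = ((1 + α) ^ (m / p)) •
      (R * (R + (∑ j ∈ Icc 1 m, (1 + α) ^ ((j - 1) / p)) • S0)⁻¹ * S0) := by
    intro m
    induction m with
    | zero =>
      simp only [Nat.zero_div, pow_zero, one_smul]
      rw [show Icc 1 0 = (∅ : Finset ℕ) by simp, Finset.sum_empty, zero_smul, add_zero,
        Matrix.mul_nonsing_inv R hRd, Matrix.one_mul, hS0]
    | succ m ih =>
      have hsnn : 0 ≤ ∑ j ∈ Icc 1 m, (1 + α) ^ ((j - 1) / p) :=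
        Finset.sum_nonneg fun j _ => le_of_lt (pow_pos hα1 _)
      have hcpos : 0 < (1 + α) ^ (m / p) := pow_pos hα1 _
      rw [hrec m, ih, aux_key R S0 hR hS0pd _ _ hcpos hsnn, smul_smul,
        Finset.sum_Icc_succ_top (by omega : 1 ≤ m + 1)]
      simp only [Nat.add_sub_cancel]
      congr 1
      rw [hαseq, Nat.succ_div]
      by_cases h : p ∣ m + 1
      · simp [h, pow_succ]; ring
      · simp [h]
  intro n q hq h1
  have hdiv : (n * p + q) / p = n := by
    rw [mul_comm, Nat.mul_add_div (by omega), Nat.div_eq_of_lt hq, add_zero]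
  rw [main (n * p + q), hdiv]
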